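/- For the sequence λ : ℕ → ℝ obtained by listing 1/(2(2k+1)) with multiplicity 2k+1 for each k ≥ 0 in decreasing order, one has λ_j · √j → 1/4 as j → ∞ (along all indices j, not just j = k²). -/

import Mathlib

open Filter Topology

/-- The ordered NP eigenvalues of the unit sphere:
`λ_j = 1/(2(2⌊√j⌋+1))` for `k² ≤ j < (k+1)²`, i.e. `λ_j = 1/(2(2⌊√j⌋+1))`. -/
noncomputable def npSphereEigenvalue (j : ℕ) : ℝ :=
  1 / (2 * (2 * (Nat.sqrt j : ℝ) + 1))

lemma np_aux (c : ℝ) :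
    Tendsto (fun s : ℕ => ((s : ℝ) + c) / (4 * s + 2)) atTop (𝓝 (1 / 4)) := by
  have hd : Tendsto (fun s : ℕ => 4 * (s : ℝ) + 2) atTop atTop := by
    apply tendsto_atTop_add_const_right
    exact Tendsto.const_mul_atTop (by norm_num) tendsto_natCast_atTop_atTop
  have h0 : Tendsto (fun s : ℕ => (c - 1/2) / (4 * (s : ℝ) + 2)) atTop (𝓝 0) :=
    Tendsto.const_div_atTop hd _
  have h := h0.const_add (1/4 : ℝ)
  rw [add_zero] at h
  refine h.congr fun s => ?_
  have hs : (4 * (s : ℝ) + 2) ≠ 0 := by positivity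
  field_simp
  ring

lemma np_sqrt_atTop : Tendsto Nat.sqrt atTop atTop := by
  refine tendsto_atTop_atTop.mpr fun b => ⟨b ^ 2, fun j hj => ?_⟩
  calc b = Nat.sqrt (b ^ 2) := by rw [Nat.sqrt_eq']
  _ ≤ Nat.sqrt j := Nat.sqrt_le_sqrt hj

/-- Along all indices, `λ_j · √j → 1/4`. -/
theorem npSphereEigenvalue_weyl :
    Tendsto (fun j : ℕ => npSphereEigenvalue j * Real.sqrt j) atTop (𝓝 (1 / 4)) := by
  have hlo : Tendsto (fun j : ℕ => ((Nat.sqrt j : ℝ) + 0) / (4 * Nat.sqrt j + 2))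
      atTop (𝓝 (1/4)) := (np_aux 0).comp np_sqrt_atTop
  have hhi : Tendsto (fun j : ℕ => ((Nat.sqrt j : ℝ) + 1) / (4 * Nat.sqrt j + 2))
      atTop (𝓝 (1/4)) := (np_aux 1).comp np_sqrt_atTop
  refine tendsto_of_tendsto_of_tendsto_of_le_of_le hlo hhi ?_ ?_
  · intro j
    set s := Nat.sqrt j with hs
    have key : ∀ x : ℝ, 1 / (2 * (2 * (s:ℝ) + 1)) * x * (4 * s + 2) = x := by
      intro x
      have hne : (2 * (2 * (s:ℝ) + 1)) ≠ 0 := by positivity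
      field_simp
      ring
    have h1 : (s : ℝ) ≤ Real.sqrt j := by
      have hsq : ((s : ℝ)) ^ 2 ≤ (j : ℝ) := by exact_mod_cast Nat.sqrt_le' j
      calc (s : ℝ) = Real.sqrt ((s : ℝ) ^ 2) := by
            rw [Real.sqrt_sq (by positivity)]
        _ ≤ Real.sqrt j := Real.sqrt_le_sqrt hsq
    have hpos : (0 : ℝ) < 4 * (s:ℝ) + 2 := by positivity
    simp only [npSphereEigenvalue, add_zero]
    rw [div_le_iff₀ hpos]
    calc (s : ℝ) ≤ Real.sqrt j := h1
      _ = 1 / (2 * (2 * (s:ℝ) + 1)) * Real.sqrt j * (4 * s + 2) := (key _).symm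
  · intro j
    set s := Nat.sqrt j with hs
    have key : ∀ x : ℝ, 1 / (2 * (2 * (s:ℝ) + 1)) * x * (4 * s + 2) = x := by
      intro x
      have hne : (2 * (2 * (s:ℝ) + 1)) ≠ 0 := by positivity
      field_simp
      ring
    have h2 : Real.sqrt j ≤ (s : ℝ) + 1 := by
      have hj : (j : ℝ) ≤ ((s : ℝ) + 1) ^ 2 := by
        have h : (j:ℝ) < ((s:ℝ)+1)^2 := by
          have := Nat.lt_succ_sqrt' j
          rw [Nat.succ_eq_add_one] at this
          exact_mod_cast this
        linarith
      calc Real.sqrt j ≤ Real.sqrt (((s : ℝ) + 1) ^ 2) := Real.sqrt_le_sqrt hj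
        _ = (s : ℝ) + 1 := Real.sqrt_sq (by positivity)
    have hpos : (0 : ℝ) < 4 * (s:ℝ) + 2 := by positivity
    simp only [npSphereEigenvalue, ge_iff_le]
    rw [le_div_iff₀ hpos]
    calc 1 / (2 * (2 * (s:ℝ) + 1)) * Real.sqrt j * (4 * s + 2)
        = Real.sqrt j := key _
      _ ≤ (s : ℝ) + 1 := h2
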